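/- Error transformation theorem: Suppose (1) with probability 1−δ/2 the landmark matrix L from M ≥ M₀ i.i.d. landmarks has minimum singular value ≥ σ_min√M; (2) f̂ and f* take values in (0, f_max] with f_max ∈ (0,1); and (3) ε_n := E_{(x,x')∼D_c}[(f̂(x,x') − f*(x,x'))²]. Then with probability at least 1−δ over the landmark sample, the risk R(φ̂) = min_v E_{x∼μ₁}[(η(x)^⊤θ* − φ̂(x)^⊤v)²] of the learned representation φ̂(x) = (f̂(x,l_j)/(1−f̂(x,l_j)))_{j≤M} satisfies R(φ̂) ≤ ‖θ*‖₂²/(σ_min²(1−f_max)⁴) · (2ε_n + √(2·log(2/δ)/M)). -/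

import Mathlib

open Finset Matrix
open scoped Classical

/-- First-half marginal `μ₁` of the joint document distribution `μ`. -/
noncomputable def marg1 {A B : Type*} [Fintype B] (μ : A × B → ℝ) (x : A) : ℝ := ∑ b, μ (x, b)

/-- Second-half marginal `μ₂` of the joint document distribution `μ`. -/
noncomputable def marg2 {A B : Type*} [Fintype A] (μ : A × B → ℝ) (x' : B) : ℝ := ∑ a, μ (a, x')

/-- The Bayes-optimal predictor for the balanced contrastive distribution `D_c`:
`f*(x,x') = μ(x,x') / (μ(x,x') + μ₁(x)μ₂(x'))`. -/
noncomputable def fstar {A B : Type*} [Fintype A] [Fintype B] (μ : A × B → ℝ)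
    (x : A) (x' : B) : ℝ :=
  μ (x, x') / (μ (x, x') + marg1 μ x * marg2 μ x')

/-- The landmark matrix `L` with columns `ψ(l_j)/μ₂(l_j)` for a landmark sample `l`. -/
noncomputable def landmarkMat {A B : Type*} [Fintype A] {N M : ℕ} (μ : A × B → ℝ)
    (ψ : B → Fin N → ℝ) (l : Fin M → B) : Matrix (Fin N) (Fin M) ℝ :=
  Matrix.of fun i j => ψ (l j) i / marg2 μ (l j)

/-- Error transformation theorem (Theorem 5.4).  Suppose (1) with probability at least
`1 − δ/2` over `M` i.i.d. landmarks `l ∼ μ₂^⊗M` the landmark matrix has minimum singular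
value at least `σ_min √M`; (2) `f̂` and `f*` take values in `(0, f_max]`; and (3)
`ε_n = E_{D_c}[(f̂ − f*)²]`.  Then with probability at least `1 − δ` over the landmark
sample, the risk of the learned representation `φ̂(x)_j = f̂(x,l_j)/(1 − f̂(x,l_j))` on the
target `η(x)^⊤θ*` satisfies
`R(φ̂) ≤ ‖θ*‖² / (σ_min² (1−f_max)⁴) · (2 ε_n + √(2 log(2/δ)/M))`. -/
private lemma sum_union_le_add {α : Type*} [DecidableEq α] (s t : Finset α) (f : α → ℝ)
    (hf : ∀ a, 0 ≤ f a) : ∑ a ∈ s ∪ t, f a ≤ (∑ a ∈ s, f a) + ∑ a ∈ t, f a := by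
  have h := Finset.sum_union_inter (s₁ := s) (s₂ := t) (f := f)
  have h2 : 0 ≤ ∑ a ∈ s ∩ t, f a := sum_nonneg fun a _ => hf a
  linarith

private lemma exp_neg_le_quad {x : ℝ} (hx : 0 ≤ x) :
    Real.exp (-x) ≤ 1 - x + x ^ 2 / 2 := by
  have h := Real.quadratic_le_exp_of_nonneg hx
  have hpos : (0:ℝ) < 1 + x + x ^ 2 / 2 := by nlinarith
  have hexp : (0:ℝ) < Real.exp x := Real.exp_pos x
  have hq : (0:ℝ) < 1 - x + x ^ 2 / 2 := by nlinarith [sq_nonneg (x-1)]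
  rw [Real.exp_neg, inv_le_iff_one_le_mul₀ hexp]
  nlinarith [mul_le_mul_of_nonneg_left h (le_of_lt hq), sq_nonneg (x^2)]

private lemma chord {x lam : ℝ} (h0 : 0 ≤ x) (h1 : x ≤ 1) :
    Real.exp (lam * x) ≤ 1 - x + x * Real.exp lam := by
  have := convexOn_exp.2 (Set.mem_univ (0:ℝ)) (Set.mem_univ lam)
    (by linarith : (0:ℝ) ≤ 1 - x) h0 (by ring)
  simpa [Real.exp_zero, mul_comm] using this

private lemma mgf_bound {B : Type*} [Fintype B] (w W : B → ℝ) (lam : ℝ)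
    (hlam : 0 ≤ lam) (hw : ∀ b, 0 ≤ w b) (hw1 : ∑ b, w b = 1)
    (hW0 : ∀ b, 0 ≤ W b) (hW1 : ∀ b, W b ≤ 1) :
    ∑ b, w b * Real.exp (lam * (W b - (∑ b, w b * W b))) ≤ Real.exp (lam ^ 2 / 2) := by
  set m : ℝ := ∑ b, w b * W b with hm
  have hm0 : 0 ≤ m := sum_nonneg fun b _ => mul_nonneg (hw b) (hW0 b)
  have hm1 : m ≤ 1 := by
    calc m ≤ ∑ b, w b * 1 := sum_le_sum fun b _ => mul_le_mul_of_nonneg_left (hW1 b) (hw b)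
    _ = 1 := by simpa using hw1
  have step1 : ∑ b, w b * Real.exp (lam * (W b - m)) =
      Real.exp (-(lam * m)) * ∑ b, w b * Real.exp (lam * W b) := by
    rw [mul_sum]
    refine sum_congr rfl fun b _ => ?_
    rw [← mul_assoc, mul_comm (Real.exp _) (w b), mul_assoc, ← Real.exp_add]
    ring_nf
  have step2 : ∑ b, w b * Real.exp (lam * W b) ≤ 1 - m + m * Real.exp lam := by
    calc ∑ b, w b * Real.exp (lam * W b)
        ≤ ∑ b, w b * (1 - W b + W b * Real.exp lam) :=
          sum_le_sum fun b _ => mul_le_mul_of_nonneg_left (chord (hW0 b) (hW1 b)) (hw b)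
      _ = (∑ b, w b) - m + m * Real.exp lam := by
          simp only [mul_sub, mul_add, sum_add_distrib, sum_sub_distrib, mul_one, hm,
            ← mul_assoc, ← sum_mul]
      _ = 1 - m + m * Real.exp lam := by rw [hw1]
  have step3 : Real.exp (-(lam * m)) * (1 - m + m * Real.exp lam) ≤ Real.exp (lam ^ 2 / 2) := by
    have hkey : 1 - m + m * Real.exp lam =
        Real.exp lam * (1 - (1 - m) * (1 - Real.exp (-lam))) := by
      rw [Real.exp_neg]
      field_simp
      ring
    have h2 : 1 - (1 - m) * (1 - Real.exp (-lam)) ≤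
        Real.exp (-((1 - m) * (1 - Real.exp (-lam)))) := by
      have := Real.add_one_le_exp (-((1 - m) * (1 - Real.exp (-lam))))
      linarith
    calc Real.exp (-(lam * m)) * (1 - m + m * Real.exp lam)
        = Real.exp (-(lam * m)) * Real.exp lam * (1 - (1 - m) * (1 - Real.exp (-lam))) := by
          rw [hkey]; ring
      _ ≤ Real.exp (-(lam * m)) * Real.exp lam *
            Real.exp (-((1 - m) * (1 - Real.exp (-lam)))) := by
          exact mul_le_mul_of_nonneg_left h2 (by positivity)
      _ = Real.exp (-(lam * m) + lam + -((1 - m) * (1 - Real.exp (-lam)))) := by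
          rw [← Real.exp_add, ← Real.exp_add]
      _ ≤ Real.exp (lam ^ 2 / 2) := by
          apply Real.exp_le_exp.2
          have hq0 : 0 ≤ lam - 1 + Real.exp (-lam) := by
            have := Real.add_one_le_exp (-lam); linarith
          have hq1 : lam - 1 + Real.exp (-lam) ≤ lam ^ 2 / 2 := by
            have := exp_neg_le_quad hlam; linarith
          nlinarith
  calc ∑ b, w b * Real.exp (lam * (W b - m))
      = Real.exp (-(lam * m)) * ∑ b, w b * Real.exp (lam * W b) := step1
    _ ≤ Real.exp (-(lam * m)) * (1 - m + m * Real.exp lam) :=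
        mul_le_mul_of_nonneg_left step2 (by positivity)
    _ ≤ Real.exp (lam ^ 2 / 2) := step3

private lemma ratio_diff_sq_le {a b f : ℝ} (ha : a ∈ Set.Ioc 0 f) (hb : b ∈ Set.Ioc 0 f)
    (hf : f < 1) :
    (a / (1 - a) - b / (1 - b)) ^ 2 ≤ (b - a) ^ 2 / (1 - f) ^ 4 := by
  have hfa : 1 - f ≤ 1 - a := by linarith [ha.2]
  have hfb : 1 - f ≤ 1 - b := by linarith [hb.2]
  have hf1 : (0:ℝ) < 1 - f := by linarith
  have ha1 : (0:ℝ) < 1 - a := by linarith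
  have hb1 : (0:ℝ) < 1 - b := by linarith
  have key : a / (1 - a) - b / (1 - b) = (a - b) / ((1 - a) * (1 - b)) := by
    field_simp
    ring
  rw [key, div_pow]
  have hqq : (1 - f) * (1 - f) ≤ (1 - a) * (1 - b) := mul_le_mul hfa hfb hf1.le ha1.le
  have h4 : (1 - f) ^ 4 ≤ ((1 - a) * (1 - b)) ^ 2 := by
    calc (1 - f) ^ 4 = ((1 - f) * (1 - f)) ^ 2 := by ring
      _ ≤ ((1 - a) * (1 - b)) ^ 2 := pow_le_pow_left₀ (by positivity) hqq 2
  calc (a - b) ^ 2 / ((1 - a) * (1 - b)) ^ 2 ≤ (a - b) ^ 2 / (1 - f) ^ 4 :=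
        div_le_div_of_nonneg_left (sq_nonneg _) (by positivity) h4
    _ = (b - a) ^ 2 / (1 - f) ^ 4 := by ring_nf

private lemma exists_good_v {N M : ℕ} (L : Matrix (Fin N) (Fin M) ℝ) (θ : Fin N → ℝ)
    (c : ℝ) (hc : 0 < c)
    (hE : ∀ u : Fin N → ℝ, c * ∑ i, u i ^ 2 ≤ ∑ j, (Lᵀ.mulVec u) j ^ 2) :
    ∃ v : Fin M → ℝ, L.mulVec v = θ ∧ ∑ j, v j ^ 2 ≤ (∑ i, θ i ^ 2) / c := by
  have hdot : ∀ u : Fin N → ℝ, u ⬝ᵥ ((L * Lᵀ) *ᵥ u) = ∑ j, (Lᵀ.mulVec u) j ^ 2 := by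
    intro u
    rw [← Matrix.mulVec_mulVec, Matrix.dotProduct_mulVec, ← Matrix.mulVec_transpose]
    simp [dotProduct, sq]
  have hinj : Function.Injective (Matrix.mulVecLin (L * Lᵀ)) := by
    rw [← LinearMap.ker_eq_bot, LinearMap.ker_eq_bot']
    intro u hu
    have h0 : u ⬝ᵥ ((L * Lᵀ) *ᵥ u) = 0 := by
      rw [show (L * Lᵀ) *ᵥ u = 0 from hu]; simp
    have h1 : c * ∑ i, u i ^ 2 ≤ 0 := by rw [← h0, hdot]; exact hE u
    have hs : (0:ℝ) ≤ ∑ i, u i ^ 2 := sum_nonneg fun i _ => sq_nonneg _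
    have h2 : ∑ i, u i ^ 2 = 0 := by nlinarith
    funext i
    have := (Finset.sum_eq_zero_iff_of_nonneg (fun i _ => sq_nonneg (u i))).mp h2 i (mem_univ i)
    have : u i = 0 := by
      have h2 : u i ^ 2 = 0 := this
      exact pow_eq_zero_iff (two_ne_zero) |>.mp h2
    simpa using this
  have hsurj := LinearMap.injective_iff_surjective.mp hinj
  obtain ⟨w, hw⟩ := hsurj θ
  rw [Matrix.mulVecLin_apply] at hw
  refine ⟨Lᵀ.mulVec w, ?_, ?_⟩
  · rw [Matrix.mulVec_mulVec, hw]
  · have hvθ : ∑ j, (Lᵀ.mulVec w) j ^ 2 = w ⬝ᵥ θ := by rw [← hdot w, hw]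
    have hCS : (w ⬝ᵥ θ) ^ 2 ≤ (∑ i, w i ^ 2) * ∑ i, θ i ^ 2 := by
      simpa [dotProduct] using sum_mul_sq_le_sq_mul_sq univ w θ
    have hEw := hE w
    set S : ℝ := ∑ j, (Lᵀ.mulVec w) j ^ 2 with hS
    have hSnn : 0 ≤ S := sum_nonneg fun j _ => sq_nonneg _
    have hQnn : (0:ℝ) ≤ ∑ i, θ i ^ 2 := sum_nonneg fun i _ => sq_nonneg _
    rw [le_div_iff₀ hc]
    rcases eq_or_lt_of_le hSnn with h | h
    · rw [← h]; simpa using hQnn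
    · have hCS' : S ^ 2 ≤ (∑ i, w i ^ 2) * ∑ i, θ i ^ 2 := by rw [hvθ]; exact hCS
      nlinarith [mul_le_mul_of_nonneg_right hEw hQnn, mul_le_mul_of_nonneg_left hCS' hc.le, h]

set_option maxHeartbeats 1000000 in
theorem stmt_19 {A B : Type*} [Fintype A] [Fintype B] {N M : ℕ} (hM : 0 < M)
    (μ : A × B → ℝ) (hμ : ∀ z, 0 ≤ μ z) (hμsum : ∑ z, μ z = 1)
    (hm1 : ∀ x, 0 < marg1 μ x) (hm2 : ∀ b, 0 < marg2 μ b)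
    (fhat : A → B → ℝ) (fmax : ℝ) (hfmax : fmax ∈ Set.Ioo (0 : ℝ) 1)
    (hfhat : ∀ x b, fhat x b ∈ Set.Ioc (0 : ℝ) fmax)
    (hfstar : ∀ x b, fstar μ x b ∈ Set.Ioc (0 : ℝ) fmax)
    -- posterior feature map `η` and likelihood features `ψ` with `g* = ⟨η, ψ⟩/μ₂` (Lemma 4.2)
    (η : A → Fin N → ℝ) (ψ : B → Fin N → ℝ)
    (hrep : ∀ x x', μ (x, x') / (marg1 μ x * marg2 μ x') =
      (∑ i, η x i * ψ x' i) / marg2 μ x')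
    (θ : Fin N → ℝ) (δ : ℝ) (hδ : δ ∈ Set.Ioo (0 : ℝ) 1)
    (σmin : ℝ) (hσ : 0 < σmin)
    -- (1): the minimum-singular-value event fails with probability at most δ/2
    (h1 : ∑ l ∈ (univ : Finset (Fin M → B)).filter (fun l =>
        ¬ ∀ u : Fin N → ℝ, (M : ℝ) * σmin ^ 2 * ∑ i, u i ^ 2 ≤
            ∑ j, ((landmarkMat μ ψ l)ᵀ.mulVec u) j ^ 2),
      ∏ j, marg2 μ (l j) ≤ δ / 2)
    -- (3): the contrastive mean squared error of `f̂`
    (εn : ℝ)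
    (hεn : εn = ∑ x : A, ∑ x' : B,
      (μ (x, x') / 2 + marg1 μ x * marg2 μ x' / 2) * (fhat x x' - fstar μ x x') ^ 2) :
    ∑ l ∈ (univ : Finset (Fin M → B)).filter (fun l =>
        ¬ ∃ v : Fin M → ℝ,
          ∑ x, marg1 μ x *
              (∑ i, η x i * θ i -
                ∑ j, (fhat x (l j) / (1 - fhat x (l j))) * v j) ^ 2 ≤
            (∑ i, θ i ^ 2) / (σmin ^ 2 * (1 - fmax) ^ 4) *
              (2 * εn + Real.sqrt (2 * Real.log (2 / δ) / M))),
      ∏ j, marg2 μ (l j) ≤ δ := by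
  classical
  obtain ⟨hδ0, hδ1⟩ := hδ
  obtain ⟨hf0, hf1⟩ := hfmax
  have hMpos : (0:ℝ) < M := by exact_mod_cast hM
  set s : ℝ := Real.sqrt (2 * Real.log (2 / δ) / M) with hs_def
  have hL0 : 0 < Real.log (2 / δ) := Real.log_pos (by rw [lt_div_iff₀ hδ0]; linarith)
  have hs_pos : 0 < s := Real.sqrt_pos.mpr (by positivity)
  have hs_sq : s ^ 2 = 2 * Real.log (2 / δ) / M := Real.sq_sqrt (by positivity)
  -- marginals sum to one
  have hm1sum : ∑ x, marg1 μ x = 1 := by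
    rw [← hμsum, Fintype.sum_prod_type]; rfl
  have hm2sum : ∑ b, marg2 μ b = 1 := by
    rw [← hμsum, Fintype.sum_prod_type]
    exact Finset.sum_comm
  -- per-point squared error is at most 1
  have hd2 : ∀ x b, (fhat x b - fstar μ x b) ^ 2 ≤ 1 := by
    intro x b
    obtain ⟨ha1, ha2⟩ := hfhat x b
    obtain ⟨hb1, hb2⟩ := hfstar x b
    nlinarith
  set W : B → ℝ := fun b => ∑ x, marg1 μ x * (fhat x b - fstar μ x b) ^ 2 with hW_def
  have hW0 : ∀ b, 0 ≤ W b :=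
    fun b => sum_nonneg fun x _ => mul_nonneg (hm1 x).le (sq_nonneg _)
  have hW1 : ∀ b, W b ≤ 1 := by
    intro b
    calc W b ≤ ∑ x, marg1 μ x * 1 :=
          sum_le_sum fun x _ => mul_le_mul_of_nonneg_left (hd2 x b) (hm1 x).le
      _ = 1 := by simpa using hm1sum
  set m : ℝ := ∑ b, marg2 μ b * W b with hm_def
  -- mean bound : m ≤ 2 εn
  have hm2εn : m ≤ 2 * εn := by
    have hmeq : m = ∑ x, ∑ b, marg1 μ x * marg2 μ b * (fhat x b - fstar μ x b) ^ 2 := by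
      calc m = ∑ b, ∑ x, marg1 μ x * marg2 μ b * (fhat x b - fstar μ x b) ^ 2 := by
            refine sum_congr rfl fun b _ => ?_
            rw [Finset.mul_sum]
            exact sum_congr rfl fun x _ => by ring
        _ = ∑ x, ∑ b, marg1 μ x * marg2 μ b * (fhat x b - fstar μ x b) ^ 2 := Finset.sum_comm
    have h2e : 2 * εn = ∑ x, ∑ b,
        (μ (x, b) + marg1 μ x * marg2 μ b) * (fhat x b - fstar μ x b) ^ 2 := by
      rw [hεn, Finset.mul_sum]
      refine sum_congr rfl fun x _ => ?_
      rw [Finset.mul_sum]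
      exact sum_congr rfl fun b _ => by ring
    rw [hmeq, h2e]
    refine sum_le_sum fun x _ => sum_le_sum fun b _ => ?_
    exact mul_le_mul_of_nonneg_right (by linarith [hμ (x, b)]) (sq_nonneg _)
  -- Chernoff bound for the second event
  have hmgf := mgf_bound (fun b => marg2 μ b) W s hs_pos.le (fun b => (hm2 b).le) hm2sum hW0 hW1
  have hmgf' : ∑ b, marg2 μ b * Real.exp (s * (W b - m)) ≤ Real.exp (s ^ 2 / 2) := by
    simpa using hmgf
  have hP2 : ∑ l ∈ (univ : Finset (Fin M → B)).filter
      (fun l => ¬ (∑ j, W (l j) ≤ M * (2 * εn + s))), ∏ j, marg2 μ (l j) ≤ δ / 2 := by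
    have key : ∀ l ∈ (univ : Finset (Fin M → B)).filter
        (fun l => ¬ (∑ j, W (l j) ≤ M * (2 * εn + s))),
        ∏ j, marg2 μ (l j) ≤ Real.exp (-(s * ((M:ℝ) * s))) *
          ∏ j, (marg2 μ (l j) * Real.exp (s * (W (l j) - m))) := by
      intro l hl
      rw [mem_filter] at hl
      have hgt : (M:ℝ) * (2 * εn + s) < ∑ j, W (l j) := not_le.mp hl.2
      have hsum : ∑ j, (W (l j) - m) = (∑ j, W (l j)) - M * m := by
        rw [sum_sub_distrib, Finset.sum_const, card_univ, Fintype.card_fin, nsmul_eq_mul]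
      have hfac : (1:ℝ) ≤ Real.exp (-(s * ((M:ℝ) * s)) + s * ∑ j, (W (l j) - m)) := by
        apply Real.one_le_exp
        rw [hsum]
        have hMm : (M:ℝ) * m ≤ (M:ℝ) * (2 * εn) := by nlinarith [hm2εn, hMpos]
        nlinarith [hs_pos]
      calc ∏ j, marg2 μ (l j)
          = (∏ j, marg2 μ (l j)) * 1 := (mul_one _).symm
        _ ≤ (∏ j, marg2 μ (l j)) *
              Real.exp (-(s * ((M:ℝ) * s)) + s * ∑ j, (W (l j) - m)) :=
            mul_le_mul_of_nonneg_left hfac (prod_nonneg fun j _ => (hm2 (l j)).le)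
        _ = Real.exp (-(s * ((M:ℝ) * s))) *
              ∏ j, (marg2 μ (l j) * Real.exp (s * (W (l j) - m))) := by
            rw [Real.exp_add, Finset.mul_sum, Real.exp_sum, Finset.prod_mul_distrib]
            ring
    calc ∑ l ∈ (univ : Finset (Fin M → B)).filter
          (fun l => ¬ (∑ j, W (l j) ≤ M * (2 * εn + s))), ∏ j, marg2 μ (l j)
        ≤ ∑ l ∈ (univ : Finset (Fin M → B)).filter
            (fun l => ¬ (∑ j, W (l j) ≤ M * (2 * εn + s))),
            Real.exp (-(s * ((M:ℝ) * s))) *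
              ∏ j, (marg2 μ (l j) * Real.exp (s * (W (l j) - m))) := sum_le_sum key
      _ ≤ ∑ l : Fin M → B, Real.exp (-(s * ((M:ℝ) * s))) *
              ∏ j, (marg2 μ (l j) * Real.exp (s * (W (l j) - m))) :=
          sum_le_sum_of_subset_of_nonneg (filter_subset _ _) (fun l _ _ =>
            mul_nonneg (Real.exp_pos _).le
              (prod_nonneg fun j _ => mul_nonneg (hm2 (l j)).le (Real.exp_pos _).le))
      _ = Real.exp (-(s * ((M:ℝ) * s))) *
            (∑ b, marg2 μ b * Real.exp (s * (W b - m))) ^ M := by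
          rw [← mul_sum, Fintype.sum_pow]
      _ ≤ Real.exp (-(s * ((M:ℝ) * s))) * (Real.exp (s ^ 2 / 2)) ^ M := by
          exact mul_le_mul_of_nonneg_left
            (pow_le_pow_left₀
              (sum_nonneg fun b _ => mul_nonneg (hm2 b).le (Real.exp_pos _).le) hmgf' M)
            (Real.exp_pos _).le
      _ = δ / 2 := by
          rw [← Real.exp_nat_mul, ← Real.exp_add]
          have hexps : -(s * ((M:ℝ) * s)) + (M:ℝ) * (s ^ 2 / 2) = -Real.log (2 / δ) := by
            have hss : s * ((M:ℝ) * s) = (M:ℝ) * s ^ 2 := by ring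
            rw [hss, hs_sq]
            field_simp
            ring
          rw [hexps, Real.exp_neg, Real.exp_log (by positivity), inv_div]
  -- deterministic part
  have hdet : ∀ l : Fin M → B,
      (∀ u : Fin N → ℝ, (M : ℝ) * σmin ^ 2 * ∑ i, u i ^ 2 ≤
          ∑ j, ((landmarkMat μ ψ l)ᵀ.mulVec u) j ^ 2) →
      (∑ j, W (l j) ≤ M * (2 * εn + s)) →
      ∃ v : Fin M → ℝ,
          ∑ x, marg1 μ x *
              (∑ i, η x i * θ i -
                ∑ j, (fhat x (l j) / (1 - fhat x (l j))) * v j) ^ 2 ≤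
            (∑ i, θ i ^ 2) / (σmin ^ 2 * (1 - fmax) ^ 4) * (2 * εn + s) := by
    intro l hE1 hE2
    have hgs : ∀ x b, fstar μ x b / (1 - fstar μ x b)
        = μ (x, b) / (marg1 μ x * marg2 μ b) := by
      intro x b
      have hq : 0 < marg1 μ x * marg2 μ b := mul_pos (hm1 x) (hm2 b)
      have hD : 0 < μ (x, b) + marg1 μ x * marg2 μ b := by linarith [hμ (x, b)]
      unfold fstar
      rw [show (1:ℝ) - μ (x, b) / (μ (x, b) + marg1 μ x * marg2 μ b)
          = (marg1 μ x * marg2 μ b) / (μ (x, b) + marg1 μ x * marg2 μ b) by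
        field_simp; ring]
      rw [div_div_div_cancel_right₀]
      exact hD.ne'
    obtain ⟨v, hLv, hvsq⟩ := exists_good_v (landmarkMat μ ψ l) θ ((M:ℝ) * σmin ^ 2)
      (by positivity) hE1
    refine ⟨v, ?_⟩
    have hcol : ∀ x j, ∑ i, η x i * landmarkMat μ ψ l i j
        = fstar μ x (l j) / (1 - fstar μ x (l j)) := by
      intro x j
      have hc1 : ∑ i, η x i * landmarkMat μ ψ l i j
          = (∑ i, η x i * ψ (l j) i) / marg2 μ (l j) := by
        rw [Finset.sum_div]
        refine sum_congr rfl fun i _ => ?_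
        show η x i * (ψ (l j) i / marg2 μ (l j)) = _
        rw [mul_div_assoc]
      rw [hc1, ← hrep x (l j), hgs]
    have hηθ : ∀ x, ∑ i, η x i * θ i
        = ∑ j, (fstar μ x (l j) / (1 - fstar μ x (l j))) * v j := by
      intro x
      calc ∑ i, η x i * θ i
          = ∑ i, η x i * ((landmarkMat μ ψ l).mulVec v i) := by rw [hLv]
        _ = ∑ i, ∑ j, η x i * (landmarkMat μ ψ l i j * v j) := by
            simp only [Matrix.mulVec, dotProduct, Finset.mul_sum]
        _ = ∑ j, (∑ i, η x i * landmarkMat μ ψ l i j) * v j := by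
            rw [Finset.sum_comm]
            refine sum_congr rfl fun j _ => ?_
            rw [Finset.sum_mul]
            exact sum_congr rfl fun i _ => by ring
        _ = ∑ j, (fstar μ x (l j) / (1 - fstar μ x (l j))) * v j :=
            sum_congr rfl fun j _ => by rw [hcol]
    have hQnn : 0 ≤ ∑ i, θ i ^ 2 := sum_nonneg fun i _ => sq_nonneg _
    have hKnn : 0 ≤ (∑ i, θ i ^ 2) / ((M:ℝ) * σmin ^ 2) := by positivity
    calc ∑ x, marg1 μ x *
            (∑ i, η x i * θ i - ∑ j, (fhat x (l j) / (1 - fhat x (l j))) * v j) ^ 2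
        = ∑ x, marg1 μ x * (∑ j, (fstar μ x (l j) / (1 - fstar μ x (l j))
              - fhat x (l j) / (1 - fhat x (l j))) * v j) ^ 2 := by
          refine sum_congr rfl fun x _ => ?_
          rw [hηθ x, ← Finset.sum_sub_distrib]
          simp only [← sub_mul]
      _ ≤ ∑ x, marg1 μ x * ((∑ j, (fstar μ x (l j) / (1 - fstar μ x (l j))
              - fhat x (l j) / (1 - fhat x (l j))) ^ 2) * ∑ j, v j ^ 2) :=
          sum_le_sum fun x _ => mul_le_mul_of_nonneg_left
            (sum_mul_sq_le_sq_mul_sq univ _ v) (hm1 x).le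
      _ ≤ ∑ x, marg1 μ x * ((∑ j, (fhat x (l j) - fstar μ x (l j)) ^ 2 / (1 - fmax) ^ 4) *
            ((∑ i, θ i ^ 2) / ((M:ℝ) * σmin ^ 2))) := by
          refine sum_le_sum fun x _ => mul_le_mul_of_nonneg_left ?_ (hm1 x).le
          refine mul_le_mul (sum_le_sum fun j _ =>
              ratio_diff_sq_le (hfstar x (l j)) (hfhat x (l j)) hf1) hvsq
            (sum_nonneg fun j _ => sq_nonneg _)
            (sum_nonneg fun j _ => div_nonneg (sq_nonneg _) (by positivity))
      _ = ((∑ i, θ i ^ 2) / ((M:ℝ) * σmin ^ 2) / (1 - fmax) ^ 4) * ∑ j, W (l j) := by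
          calc ∑ x, marg1 μ x * ((∑ j, (fhat x (l j) - fstar μ x (l j)) ^ 2 / (1 - fmax) ^ 4) *
                ((∑ i, θ i ^ 2) / ((M:ℝ) * σmin ^ 2)))
              = ∑ x, ∑ j, ((∑ i, θ i ^ 2) / ((M:ℝ) * σmin ^ 2) / (1 - fmax) ^ 4) *
                  (marg1 μ x * (fhat x (l j) - fstar μ x (l j)) ^ 2) := by
                refine sum_congr rfl fun x _ => ?_
                rw [Finset.sum_mul, Finset.mul_sum]
                exact sum_congr rfl fun j _ => by ring
            _ = ∑ j, ∑ x, ((∑ i, θ i ^ 2) / ((M:ℝ) * σmin ^ 2) / (1 - fmax) ^ 4) *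
                  (marg1 μ x * (fhat x (l j) - fstar μ x (l j)) ^ 2) := Finset.sum_comm
            _ = ((∑ i, θ i ^ 2) / ((M:ℝ) * σmin ^ 2) / (1 - fmax) ^ 4) * ∑ j, W (l j) := by
                rw [Finset.mul_sum]
                exact sum_congr rfl fun j _ => by rw [Finset.mul_sum]
      _ ≤ ((∑ i, θ i ^ 2) / ((M:ℝ) * σmin ^ 2) / (1 - fmax) ^ 4) * ((M:ℝ) * (2 * εn + s)) :=
          mul_le_mul_of_nonneg_left hE2 (by positivity)
      _ = (∑ i, θ i ^ 2) / (σmin ^ 2 * (1 - fmax) ^ 4) * (2 * εn + s) := by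
          have h1f : (0:ℝ) < 1 - fmax := by linarith
          field_simp
  -- assembly
  have hFnn : ∀ l : Fin M → B, 0 ≤ ∏ j, marg2 μ (l j) :=
    fun l => prod_nonneg fun j _ => (hm2 (l j)).le
  calc ∑ l ∈ (univ : Finset (Fin M → B)).filter (fun l =>
        ¬ ∃ v : Fin M → ℝ,
          ∑ x, marg1 μ x *
              (∑ i, η x i * θ i -
                ∑ j, (fhat x (l j) / (1 - fhat x (l j))) * v j) ^ 2 ≤
            (∑ i, θ i ^ 2) / (σmin ^ 2 * (1 - fmax) ^ 4) *
              (2 * εn + Real.sqrt (2 * Real.log (2 / δ) / M))),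
      ∏ j, marg2 μ (l j)
      ≤ ∑ l ∈ (univ : Finset (Fin M → B)).filter (fun l =>
          (¬ ∀ u : Fin N → ℝ, (M : ℝ) * σmin ^ 2 * ∑ i, u i ^ 2 ≤
            ∑ j, ((landmarkMat μ ψ l)ᵀ.mulVec u) j ^ 2) ∨
          ¬ (∑ j, W (l j) ≤ M * (2 * εn + s))), ∏ j, marg2 μ (l j) := by
        apply sum_le_sum_of_subset_of_nonneg
        · apply Finset.monotone_filter_right
          intro l _ hl
          by_contra hc
          push_neg at hc
          exact hl (hdet l hc.1 hc.2)
        · exact fun l _ _ => hFnn l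
    _ ≤ δ / 2 + δ / 2 := by
        rw [Finset.filter_or]
        refine le_trans (sum_union_le_add _ _ _ hFnn) (add_le_add h1 hP2)
    _ = δ := by ring
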